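/- Let n1, n2, n3, n4, m be nonnegative integers with n1 > n2, n4 ≥ n3, and m ≤ n2; let q = max(n1, n2, n3, n4, m) and let Q be the q×q shift matrix over 𝔽₂. Then for every pair of q×q matrices G_A, G_B over 𝔽₂, with G_S = Q^{q−n3} G_A Q^{q−n1} + Q^{q−n4} G_B Q^{q−n2} and G_M = Q^{q−n3} G_A Q^{q−m} + Q^{q−n4} G_B Q^{q−m}, one has rank(G_S) − dim(range(G_S) ∩ range(G_M)) ≤ min(n1, n4, n2 + n3 − m). -/
import Mathlib


/-- The `q × q` lower shift matrix over `𝔽₂`: entry `(i, j)` is `1` iff `i = j + 1`. -/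
def shiftQ (q : ℕ) : Matrix (Fin q) (Fin q) (ZMod 2) :=
  Matrix.of fun i j => if (i : ℕ) = (j : ℕ) + 1 then 1 else 0

/-- Source-to-destination transfer matrix
`G_S = Q^(q-n3) G_A Q^(q-n1) + Q^(q-n4) G_B Q^(q-n2)`. -/
def GSmat (q n1 n2 n3 n4 : ℕ) (GA GB : Matrix (Fin q) (Fin q) (ZMod 2)) :
    Matrix (Fin q) (Fin q) (ZMod 2) :=
  shiftQ q ^ (q - n3) * GA * shiftQ q ^ (q - n1) +
    shiftQ q ^ (q - n4) * GB * shiftQ q ^ (q - n2)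

/-- Interference transfer matrix
`G_M = Q^(q-n3) G_A Q^(q-m) + Q^(q-n4) G_B Q^(q-m)`. -/
def GMmat (q n3 n4 m : ℕ) (GA GB : Matrix (Fin q) (Fin q) (ZMod 2)) :
    Matrix (Fin q) (Fin q) (ZMod 2) :=
  shiftQ q ^ (q - n3) * GA * shiftQ q ^ (q - m) +
    shiftQ q ^ (q - n4) * GB * shiftQ q ^ (q - m)

/-- The achievable rate `rank G_S - dim (range G_S ∩ range G_M)` of a linear scheme. -/
noncomputable def linRate (q : ℕ) (GS GM : Matrix (Fin q) (Fin q) (ZMod 2)) : ℕ :=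
  GS.rank - Module.finrank (ZMod 2)
    ↥(LinearMap.range GS.mulVecLin ⊓ LinearMap.range GM.mulVecLin)

namespace RateAux

open Matrix Submodule Module Finset


lemma shiftQ_pow_apply (q k : ℕ) (i j : Fin q) :
    (shiftQ q ^ k) i j = if (i : ℕ) = (j : ℕ) + k then 1 else 0 := by
  induction k generalizing j with
  | zero => simp [Matrix.one_apply, Fin.ext_iff]
  | succ k ih =>
    rw [pow_succ, Matrix.mul_apply]
    by_cases h : (j : ℕ) + 1 < q
    · rw [Finset.sum_eq_single (⟨(j : ℕ) + 1, h⟩ : Fin q)]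
      · rw [ih]
        have h1 : ((⟨(j : ℕ) + 1, h⟩ : Fin q) : ℕ) = (j : ℕ) + 1 := rfl
        have h2 : shiftQ q ⟨(j : ℕ) + 1, h⟩ j = 1 := by
          simp [shiftQ]
        rw [h2, mul_one, h1]
        have h3 : ((i : ℕ) = (j : ℕ) + 1 + k) ↔ ((i : ℕ) = (j : ℕ) + (k + 1)) := by omega
        rw [if_congr h3 rfl rfl]
      · intro l _ hl
        have hl' : (l : ℕ) ≠ (j : ℕ) + 1 := fun hc => hl (Fin.ext hc)
        have : shiftQ q l j = 0 := by simp [shiftQ, hl']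
        rw [this, mul_zero]
      · simp
    · rw [Finset.sum_eq_zero, eq_comm, if_neg (by omega)]
      intro l _
      have hl' : (l : ℕ) ≠ (j : ℕ) + 1 := by omega
      have : shiftQ q l j = 0 := by simp [shiftQ, hl']
      rw [this, mul_zero]

lemma shiftQ_pow_mulVec (q k : ℕ) (x : Fin q → ZMod 2) (i : Fin q) :
    ((shiftQ q ^ k).mulVec x) i
      = if h : k ≤ (i : ℕ) then x ⟨(i : ℕ) - k, by omega⟩ else 0 := by
  rw [Matrix.mulVec, dotProduct]
  by_cases h : k ≤ (i : ℕ)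
  · rw [dif_pos h, Finset.sum_eq_single (⟨(i : ℕ) - k, by omega⟩ : Fin q)]
    · rw [shiftQ_pow_apply]
      have : (i : ℕ) = ((⟨(i : ℕ) - k, by omega⟩ : Fin q) : ℕ) + k := by
        show (i : ℕ) = (i : ℕ) - k + k
        omega
      rw [if_pos this, one_mul]
    · intro l _ hl
      have hl' : (i : ℕ) ≠ (l : ℕ) + k := by
        intro hc
        refine hl (Fin.ext ?_)
        show (l : ℕ) = (i : ℕ) - k
        omega
      rw [shiftQ_pow_apply, if_neg hl', zero_mul]
    · simp
  · rw [dif_neg h, Finset.sum_eq_zero]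
    intro l _
    rw [shiftQ_pow_apply, if_neg (by omega), zero_mul]

lemma mem_range_shiftQ_pow {q : ℕ} (k : ℕ) (v : Fin q → ZMod 2)
    (hv : ∀ i : Fin q, (i : ℕ) < k → v i = 0) :
    v ∈ LinearMap.range (shiftQ q ^ k).mulVecLin := by
  refine ⟨fun j => if h : (j : ℕ) + k < q then v ⟨(j : ℕ) + k, h⟩ else 0, funext fun i => ?_⟩
  rw [Matrix.mulVecLin_apply, shiftQ_pow_mulVec]
  by_cases h : k ≤ (i : ℕ)
  · rw [dif_pos h, dif_pos (show ((⟨(i : ℕ) - k, by omega⟩ : Fin q) : ℕ) + k < q by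
      show (i : ℕ) - k + k < q; omega)]
    congr 1
    apply Fin.ext
    show (i : ℕ) - k + k = (i : ℕ)
    omega
  · rw [dif_neg h, hv i (by omega)]

lemma range_shiftQ_pow_apply {q : ℕ} (k : ℕ) (v : Fin q → ZMod 2)
    (hv : v ∈ LinearMap.range (shiftQ q ^ k).mulVecLin) :
    ∀ i : Fin q, (i : ℕ) < k → v i = 0 := by
  obtain ⟨x, rfl⟩ := hv
  intro i hi
  rw [Matrix.mulVecLin_apply, shiftQ_pow_mulVec, dif_neg (by omega)]

lemma mem_span_singles {q : ℕ} (p : Fin q → Prop) [DecidablePred p] (v : Fin q → ZMod 2)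
    (hv : ∀ i, ¬ p i → v i = 0) :
    v ∈ span (ZMod 2)
      ↑((Finset.univ.filter p).image fun i => Pi.single i (1 : ZMod 2)) := by
  have hrep : ∑ i ∈ Finset.univ.filter p, Pi.single i (v i) = v := by
    rw [Finset.sum_filter_of_ne, Finset.univ_sum_single]
    intro i _ hne
    by_contra hp
    exact hne (by rw [hv i hp, Pi.single_zero])
  rw [← hrep]
  refine Submodule.sum_mem _ fun i hi => ?_
  have h01 : ∀ a : ZMod 2, a = 0 ∨ a = 1 := by decide
  rcases h01 (v i) with h | h
  · rw [h, Pi.single_zero]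
    exact Submodule.zero_mem _
  · rw [h]
    exact Submodule.subset_span (Finset.mem_coe.2 (Finset.mem_image_of_mem _ hi))

lemma card_filter_lt_le (q k : ℕ) :
    (Finset.univ.filter fun i : Fin q => (i : ℕ) < k).card ≤ k := by
  have := Finset.card_le_card_of_injOn (f := fun i : Fin q => (i : ℕ))
    (s := Finset.univ.filter fun i : Fin q => (i : ℕ) < k)
    (t := Finset.range k)
    (fun i hi => Finset.mem_range.2 (Finset.mem_filter.1 hi).2)
    (fun a _ b _ h => Fin.ext h)
  simpa using this

lemma card_filter_ge_le (q k : ℕ) (hk : k ≤ q) :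
    (Finset.univ.filter fun i : Fin q => k ≤ (i : ℕ)).card ≤ q - k := by
  rcases Nat.eq_zero_or_pos k with rfl | hk0
  · simpa using Finset.card_filter_le (Finset.univ : Finset (Fin q))
      (fun i : Fin q => 0 ≤ (i : ℕ))
  have hq0 : 0 < q := lt_of_lt_of_le hk0 hk
  have htot := Finset.card_filter_add_card_filter_not
    (s := (Finset.univ : Finset (Fin q))) (p := fun i : Fin q => k ≤ (i : ℕ))
  have hcu : (Finset.univ : Finset (Fin q)).card = q := by simp
  have hlt : k ≤ (Finset.univ.filter fun i : Fin q => ¬ k ≤ (i : ℕ)).card := by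
    have := Finset.card_le_card_of_injOn (fun n : ℕ => (⟨n % q, Nat.mod_lt _ hq0⟩ : Fin q))
      (s := Finset.range k)
      (t := Finset.univ.filter fun i : Fin q => ¬ k ≤ (i : ℕ))
      (fun n hn => by
        have hn' : n < k := Finset.mem_range.1 hn
        have hmod : n % q = n := Nat.mod_eq_of_lt (lt_of_lt_of_le hn' hk)
        refine Finset.mem_filter.2 ⟨Finset.mem_univ _, ?_⟩
        show ¬ k ≤ n % q
        rw [hmod]
        omega)
      (fun a ha b hb h => by
        have ha' : a < q := lt_of_lt_of_le (Finset.mem_range.1 ha) hk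
        have hb' : b < q := lt_of_lt_of_le (Finset.mem_range.1 hb) hk
        have h2 : a % q = b % q := by simpa using congrArg Fin.val h
        rwa [Nat.mod_eq_of_lt ha', Nat.mod_eq_of_lt hb'] at h2)
    simpa using this
  omega

lemma finrank_sup_le {V : Type*} [AddCommGroup V] [Module (ZMod 2) V]
    [FiniteDimensional (ZMod 2) V] (A B : Submodule (ZMod 2) V) :
    finrank (ZMod 2) ↥(A ⊔ B) ≤ finrank (ZMod 2) A + finrank (ZMod 2) B := by
  have := Submodule.finrank_sup_add_finrank_inf_eq A B
  omega

lemma rank_shiftQ_pow_le (q k : ℕ) (hk : k ≤ q) : (shiftQ q ^ k).rank ≤ q - k := by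
  classical
  set s := ((Finset.univ.filter fun i : Fin q => k ≤ (i : ℕ)).image
    fun i => Pi.single i (1 : ZMod 2)) with hs
  have hle : LinearMap.range (shiftQ q ^ k).mulVecLin ≤ span (ZMod 2) ↑s := by
    intro v hv
    exact mem_span_singles _ v fun i hi =>
      range_shiftQ_pow_apply k v hv i (by omega)
  have h1 : (shiftQ q ^ k).rank ≤ finrank (ZMod 2) (span (ZMod 2) (↑s : Set (Fin q → ZMod 2))) :=
    Submodule.finrank_mono hle
  have h2 := finrank_span_finset_le_card (R := ZMod 2) s
  rw [Set.finrank] at h2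
  have h3 : s.card ≤ q - k :=
    le_trans (Finset.card_image_le) (card_filter_ge_le q k hk)
  omega

lemma rank_le_rank_mul_shiftQ_pow (q k : ℕ) (X : Matrix (Fin q) (Fin q) (ZMod 2)) :
    X.rank ≤ (X * shiftQ q ^ k).rank + k := by
  classical
  set s := ((Finset.univ.filter fun i : Fin q => (i : ℕ) < k).image
    fun i => Pi.single i (1 : ZMod 2)) with hs
  have htop : (⊤ : Submodule (ZMod 2) (Fin q → ZMod 2)) ≤
      LinearMap.range (shiftQ q ^ k).mulVecLin ⊔ span (ZMod 2) ↑s := by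
    intro v _
    have hu : (fun i : Fin q => if (i : ℕ) < k then v i else 0) ∈ span (ZMod 2) (↑s : Set _) :=
      mem_span_singles _ _ fun i hi => if_neg hi
    have hw : (v - fun i : Fin q => if (i : ℕ) < k then v i else 0) ∈
        LinearMap.range (shiftQ q ^ k).mulVecLin := by
      refine mem_range_shiftQ_pow k _ fun i hi => ?_
      simp only [Pi.sub_apply, if_pos hi, sub_self]
    have hv : v = (v - fun i : Fin q => if (i : ℕ) < k then v i else 0) +
        (fun i : Fin q => if (i : ℕ) < k then v i else 0) := by
      ext i; simp
    rw [hv]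
    exact Submodule.add_mem_sup hw hu
  have h2 : Submodule.map X.mulVecLin (LinearMap.range (shiftQ q ^ k).mulVecLin)
      = LinearMap.range ((X * shiftQ q ^ k).mulVecLin) := by
    rw [Matrix.mulVecLin_mul, LinearMap.range_comp]
  have h1 : X.rank = finrank (ZMod 2) (Submodule.map X.mulVecLin ⊤) := by
    rw [Submodule.map_top]; rfl
  have h3 : finrank (ZMod 2) (Submodule.map X.mulVecLin ⊤) ≤
      finrank (ZMod 2) (Submodule.map X.mulVecLin
        (LinearMap.range (shiftQ q ^ k).mulVecLin ⊔ span (ZMod 2) ↑s)) :=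
    Submodule.finrank_mono (Submodule.map_mono htop)
  rw [Submodule.map_sup, h2] at h3
  have h4 := finrank_sup_le (LinearMap.range ((X * shiftQ q ^ k).mulVecLin))
    (Submodule.map X.mulVecLin (span (ZMod 2) ↑s))
  have h5 : finrank (ZMod 2) (Submodule.map X.mulVecLin (span (ZMod 2) (↑s : Set _)))
      ≤ finrank (ZMod 2) (span (ZMod 2) (↑s : Set (Fin q → ZMod 2))) :=
    Submodule.finrank_map_le _ _
  have h6 := finrank_span_finset_le_card (R := ZMod 2) s
  rw [Set.finrank] at h6
  have h7 : s.card ≤ k := le_trans Finset.card_image_le (card_filter_lt_le q k)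
  have h8 : (X * shiftQ q ^ k).rank = finrank (ZMod 2)
      (LinearMap.range ((X * shiftQ q ^ k).mulVecLin)) := rfl
  omega

end RateAux

open RateAux Matrix Submodule Module

/-- Case `n1 > n2`, `n4 ≥ n3`, `m ≤ n2`: upper bound on the achievable rate. -/
theorem rate_upper_bound_case3
    (n1 n2 n3 n4 m q : ℕ) (hq : q = max n1 (max n2 (max n3 (max n4 m))))
    (h12 : n2 < n1) (h34 : n3 ≤ n4) (hm : m ≤ n2)
    (GA GB : Matrix (Fin q) (Fin q) (ZMod 2)) :
    linRate q (GSmat q n1 n2 n3 n4 GA GB) (GMmat q n3 n4 m GA GB)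
      ≤ min n1 (min n4 (n2 + n3 - m)) := by
  classical
  have hn1 : n1 ≤ q := by omega
  have hn2 : n2 ≤ q := by omega
  have hn3 : n3 ≤ q := by omega
  have hn4 : n4 ≤ q := by omega
  have hmq : m ≤ q := by omega
  have hadd : ∀ X : Matrix (Fin q) (Fin q) (ZMod 2), X + X = 0 := by
    intro X
    ext i j
    have h2 : ∀ a : ZMod 2, a + a = 0 := by decide
    simpa using h2 (X i j)
  obtain ⟨C, hC⟩ : ∃ C, C = shiftQ q ^ (q - n3) * GA + shiftQ q ^ (q - n4) * GB := ⟨_, rfl⟩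
  obtain ⟨E, hEdef⟩ : ∃ E, E = shiftQ q ^ (q - n3) *
      (GA * (shiftQ q ^ (q - n1) + shiftQ q ^ (q - n2))) := ⟨_, rfl⟩
  have e2m : shiftQ q ^ (q - m) = shiftQ q ^ (q - n2) * shiftQ q ^ (n2 - m) := by
    rw [← pow_add]; congr 1; omega
  have e12 : shiftQ q ^ (q - n2) = shiftQ q ^ (n1 - n2) * shiftQ q ^ (q - n1) := by
    rw [← pow_add]; congr 1; omega
  have e34 : shiftQ q ^ (q - n3) = shiftQ q ^ (q - n4) * shiftQ q ^ (n4 - n3) := by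
    rw [← pow_add]; congr 1; omega
  have id1 : GSmat q n1 n2 n3 n4 GA GB = C * shiftQ q ^ (q - n2) + E := by
    rw [hC, hEdef]
    unfold GSmat
    rw [show (shiftQ q ^ (q - n3) * GA + shiftQ q ^ (q - n4) * GB) * shiftQ q ^ (q - n2) +
        shiftQ q ^ (q - n3) * (GA * (shiftQ q ^ (q - n1) + shiftQ q ^ (q - n2)))
        = shiftQ q ^ (q - n3) * GA * shiftQ q ^ (q - n1) +
          shiftQ q ^ (q - n4) * GB * shiftQ q ^ (q - n2) +
          (shiftQ q ^ (q - n3) * GA * shiftQ q ^ (q - n2) +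
           shiftQ q ^ (q - n3) * GA * shiftQ q ^ (q - n2)) from by noncomm_ring,
      hadd, add_zero]
  have id2 : GMmat q n3 n4 m GA GB = C * shiftQ q ^ (q - m) := by
    rw [hC]
    unfold GMmat
    noncomm_ring
  -- rank GS ≤ n1
  have hrank1 : (GSmat q n1 n2 n3 n4 GA GB).rank ≤ n1 := by
    have idn1 : GSmat q n1 n2 n3 n4 GA GB =
        (shiftQ q ^ (q - n3) * GA + shiftQ q ^ (q - n4) * (GB * shiftQ q ^ (n1 - n2))) *
          shiftQ q ^ (q - n1) := by
      unfold GSmat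
      rw [e12]
      noncomm_ring
    rw [idn1]
    refine le_trans (Matrix.rank_mul_le_right _ _) ?_
    have := rank_shiftQ_pow_le q (q - n1) (by omega)
    omega
  -- rank GS ≤ n4
  have hrank4 : (GSmat q n1 n2 n3 n4 GA GB).rank ≤ n4 := by
    have idn4 : GSmat q n1 n2 n3 n4 GA GB =
        shiftQ q ^ (q - n4) *
          (shiftQ q ^ (n4 - n3) * (GA * shiftQ q ^ (q - n1)) + GB * shiftQ q ^ (q - n2)) := by
      unfold GSmat
      rw [e34]
      noncomm_ring
    rw [idn4]
    refine le_trans (Matrix.rank_mul_le_left _ _) ?_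
    have := rank_shiftQ_pow_le q (q - n4) (by omega)
    omega
  -- submodules
  have idm : GMmat q n3 n4 m GA GB = (C * shiftQ q ^ (q - n2)) * shiftQ q ^ (n2 - m) := by
    rw [id2, e2m, mul_assoc]
  have hRS : LinearMap.range (GSmat q n1 n2 n3 n4 GA GB).mulVecLin ≤
      LinearMap.range (C * shiftQ q ^ (q - n2)).mulVecLin ⊔ LinearMap.range E.mulVecLin := by
    rintro v ⟨x, rfl⟩
    rw [id1]
    have hx : (C * shiftQ q ^ (q - n2) + E).mulVecLin x
        = (C * shiftQ q ^ (q - n2)).mulVecLin x + E.mulVecLin x := by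
      simp [Matrix.mulVecLin_apply, Matrix.add_mulVec]
    rw [hx]
    exact Submodule.add_mem_sup (LinearMap.mem_range_self _ x) (LinearMap.mem_range_self _ x)
  have hRM : LinearMap.range (GMmat q n3 n4 m GA GB).mulVecLin ≤
      LinearMap.range (C * shiftQ q ^ (q - n2)).mulVecLin := by
    rintro v ⟨x, rfl⟩
    refine ⟨(shiftQ q ^ (n2 - m)).mulVec x, ?_⟩
    rw [idm]
    simp [Matrix.mulVecLin_apply, Matrix.mulVec_mulVec]
  have hE' : finrank (ZMod 2) (LinearMap.range E.mulVecLin) ≤ n3 := by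
    have hre : finrank (ZMod 2) (LinearMap.range E.mulVecLin) = E.rank := rfl
    rw [hre, hEdef]
    refine le_trans (Matrix.rank_mul_le_left _ _) ?_
    have := rank_shiftQ_pow_le q (q - n3) (by omega)
    omega
  have hcod : finrank (ZMod 2) (LinearMap.range (C * shiftQ q ^ (q - n2)).mulVecLin)
      ≤ finrank (ZMod 2) (LinearMap.range (GMmat q n3 n4 m GA GB).mulVecLin) + (n2 - m) := by
    have h := rank_le_rank_mul_shiftQ_pow q (n2 - m) (C * shiftQ q ^ (q - n2))
    rw [← idm] at h
    exact h
  have hsup : finrank (ZMod 2)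
      ↥(LinearMap.range (GSmat q n1 n2 n3 n4 GA GB).mulVecLin ⊔
        LinearMap.range (GMmat q n3 n4 m GA GB).mulVecLin)
      ≤ finrank (ZMod 2) (LinearMap.range (C * shiftQ q ^ (q - n2)).mulVecLin) +
        finrank (ZMod 2) (LinearMap.range E.mulVecLin) :=
    le_trans (Submodule.finrank_mono (sup_le hRS (le_trans hRM le_sup_left)))
      (finrank_sup_le _ _)
  have heq := Submodule.finrank_sup_add_finrank_inf_eq
    (LinearMap.range (GSmat q n1 n2 n3 n4 GA GB).mulVecLin)
    (LinearMap.range (GMmat q n3 n4 m GA GB).mulVecLin)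
  have hrS : (GSmat q n1 n2 n3 n4 GA GB).rank
      = finrank (ZMod 2) (LinearMap.range (GSmat q n1 n2 n3 n4 GA GB).mulVecLin) := rfl
  have hrM : (GMmat q n3 n4 m GA GB).rank
      = finrank (ZMod 2) (LinearMap.range (GMmat q n3 n4 m GA GB).mulVecLin) := rfl
  unfold linRate
  rw [hrS] at hrank1 hrank4 ⊢
  omega
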